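/- Under the same setting as the preceding energy-norm estimate, the b-norm error satisfies ‖u_i − E_k u_i‖_b ≤ (1 + μ̄_{k+1}/δ) η ‖(I − P_h) u_i‖_a, and consequently ‖u_i − E_k u_i‖_b ≤ (1 + μ̄_{k+1}/δ) η ‖u_i − E_k u_i‖_a. -/

import Mathlib

section Helpers

variable {V : Type*} [AddCommGroup V] [Module ℝ V]

private lemma bilin_semidef (b : LinearMap.BilinForm ℝ V)
    (hbpos : ∀ x, x ≠ 0 → 0 < b x x) : ∀ v, 0 ≤ b v v := by
  intro v
  by_cases h : v = 0
  · simp [h]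
  · exact (hbpos v h).le

private lemma bilin_cauchy (b : LinearMap.BilinForm ℝ V) (hbsymm : ∀ x y, b x y = b y x)
    (hsd : ∀ v, 0 ≤ b v v) (x y : V) : (b x y) ^ 2 ≤ b x x * b y y := by
  have h : ∀ t : ℝ, 0 ≤ b y y * (t * t) + (2 * b x y) * t + b x x := by
    intro t
    have h0 := hsd (x + t • y)
    have hexp : b (x + t • y) (x + t • y) = b y y * (t * t) + (2 * b x y) * t + b x x := by
      simp only [map_add, map_smul, LinearMap.add_apply, LinearMap.smul_apply, smul_eq_mul]
      rw [hbsymm y x]; ring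
    linarith [hexp ▸ h0]
  have hd := discrim_le_zero h
  rw [discrim] at hd
  nlinarith [hd]

private lemma bilin_cs (b : LinearMap.BilinForm ℝ V) (hbsymm : ∀ x y, b x y = b y x)
    (hsd : ∀ v, 0 ≤ b v v) (x y : V) :
    b x y ≤ Real.sqrt (b x x) * Real.sqrt (b y y) := by
  calc b x y ≤ |b x y| := le_abs_self _
    _ = Real.sqrt ((b x y) ^ 2) := (Real.sqrt_sq_eq_abs _).symm
    _ ≤ Real.sqrt (b x x * b y y) := Real.sqrt_le_sqrt (bilin_cauchy b hbsymm hsd x y)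
    _ = Real.sqrt (b x x) * Real.sqrt (b y y) := Real.sqrt_mul (hsd x) _

private lemma bilin_triangle (b : LinearMap.BilinForm ℝ V) (hbsymm : ∀ x y, b x y = b y x)
    (hsd : ∀ v, 0 ≤ b v v) (x y : V) :
    Real.sqrt (b (x + y) (x + y)) ≤ Real.sqrt (b x x) + Real.sqrt (b y y) := by
  have hx := Real.sq_sqrt (hsd x)
  have hy := Real.sq_sqrt (hsd y)
  have hcs := bilin_cs b hbsymm hsd x y
  have hexp : b (x + y) (x + y) = b x x + 2 * b x y + b y y := by
    simp only [map_add, LinearMap.add_apply]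
    rw [hbsymm y x]; ring
  have h1 : b (x + y) (x + y) ≤ (Real.sqrt (b x x) + Real.sqrt (b y y)) ^ 2 := by
    nlinarith [Real.sqrt_nonneg (b x x), Real.sqrt_nonneg (b y y)]
  calc Real.sqrt (b (x + y) (x + y))
      ≤ Real.sqrt ((Real.sqrt (b x x) + Real.sqrt (b y y)) ^ 2) := Real.sqrt_le_sqrt h1
    _ = Real.sqrt (b x x) + Real.sqrt (b y y) := Real.sqrt_sq (by positivity)

end Helpers

/-- b-norm error estimates
`‖u_i − E_k u_i‖_b ≤ (1 + μ̄_{k+1}/δ) η ‖(I − P_h) u_i‖_a` and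
`‖u_i − E_k u_i‖_b ≤ (1 + μ̄_{k+1}/δ) η ‖u_i − E_k u_i‖_a`. -/
theorem stmt_9 {V : Type*} [AddCommGroup V] [Module ℝ V]
    (a b : LinearMap.BilinForm ℝ V)
    (hasymm : ∀ x y, a x y = a y x) (hbsymm : ∀ x y, b x y = b y x)
    (hapos : ∀ x, x ≠ 0 → 0 < a x x) (hbpos : ∀ x, x ≠ 0 → 0 < b x x)
    (N : ℕ) (Vh : Submodule ℝ V) (hdim : Module.finrank ℝ Vh = N)
    (lamb : Fin N → ℝ) (ub : Fin N → V) (hmem : ∀ j, ub j ∈ Vh)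
    (hpos : ∀ j, 0 < lamb j) (hmono : Monotone lamb)
    (heig : ∀ j, ∀ v ∈ Vh, a (ub j) v = lamb j * b (ub j) v)
    (horth : ∀ i j, a (ub i) (ub j) = if i = j then 1 else 0)
    (Ph : V →ₗ[ℝ] V) (hPmem : ∀ w, Ph w ∈ Vh)
    (hPproj : ∀ w, ∀ vh ∈ Vh, a (Ph w) vh = a w vh)
    (k : ℕ) (hk : k < N)
    (Ek : V →ₗ[ℝ] V)
    (hEmem : ∀ w, Ek w ∈ Submodule.span ℝ (Set.range fun j : {j : Fin N // (j : ℕ) < k} => ub j))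
    (hEproj : ∀ w, ∀ j : Fin N, (j : ℕ) < k → a (Ek w) (ub j) = a w (ub j))
    (lam : ℝ) (hlam : 0 < lam) (u : V) (hu : ∀ v, a u v = lam * b u v)
    (δ : ℝ)
    (hδdef : δ = (Finset.univ.filter (fun j : Fin N => k ≤ (j : ℕ))).inf'
        ⟨⟨k, hk⟩, by simp⟩ (fun j => |1 / lamb j - 1 / lam|))
    (hδpos : 0 < δ)
    (η : ℝ) (hηpos : 0 < η)
    (hη : ∀ w : V, Real.sqrt (b (w - Ph w) (w - Ph w)) ≤
        η * Real.sqrt (a (w - Ph w) (w - Ph w))) :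
    Real.sqrt (b (u - Ek u) (u - Ek u)) ≤
        (1 + (1 / lamb ⟨k, hk⟩) / δ) * η * Real.sqrt (a (u - Ph u) (u - Ph u)) ∧
      Real.sqrt (b (u - Ek u) (u - Ek u)) ≤
        (1 + (1 / lamb ⟨k, hk⟩) / δ) * η * Real.sqrt (a (u - Ek u) (u - Ek u)) := by
  have hbsd := bilin_semidef b hbpos
  have hasd := bilin_semidef a hapos
  set μk : ℝ := 1 / lamb ⟨k, hk⟩ with hμkdef
  have hμkpos : 0 < μk := one_div_pos.mpr (hpos ⟨k, hk⟩)
  set w : V := u - Ph u with hwdef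
  set e : V := Ph u - Ek u with hedef
  -- δ is a lower bound
  have hδle : ∀ j : Fin N, k ≤ (j : ℕ) → δ ≤ |1 / lamb j - 1 / lam| := by
    intro j hj
    rw [hδdef]
    exact Finset.inf'_le _ (by simp [hj])
  -- b-orthogonality
  have hborth : ∀ i j, b (ub i) (ub j) = (if i = j then 1 else 0) / lamb i := by
    intro i j
    have h1 := heig i (ub j) (hmem j)
    rw [horth] at h1
    rw [eq_div_iff (hpos i).ne', mul_comm]
    exact h1.symm
  -- Ek u ∈ Vh
  have hspanle : Submodule.span ℝ
      (Set.range fun j : {j : Fin N // (j : ℕ) < k} => ub j) ≤ Vh := by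
    rw [Submodule.span_le]
    rintro _ ⟨j, rfl⟩
    exact hmem j
  have hEkVh : Ek u ∈ Vh := hspanle (hEmem u)
  have heVh : e ∈ Vh := Vh.sub_mem (hPmem u) hEkVh
  -- linear independence and spanning
  have hindep : LinearIndependent ℝ ub := by
    rw [Fintype.linearIndependent_iff]
    intro g hg i
    have h2 : a (∑ j, g j • ub j) (ub i) = 0 := by rw [hg]; simp
    simpa [map_sum, LinearMap.sum_apply, map_smul, LinearMap.smul_apply, smul_eq_mul,
      horth] using h2
  have hspan : Submodule.span ℝ (Set.range ub) = Vh := by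
    have hub' : ∀ j, (Vh.subtype ∘ fun j : Fin N => (⟨ub j, hmem j⟩ : Vh)) j = ub j :=
      fun j => rfl
    have hindep' : LinearIndependent ℝ (fun j : Fin N => (⟨ub j, hmem j⟩ : Vh)) := by
      apply LinearIndependent.of_comp Vh.subtype
      convert hindep
      exact funext hub'
    have : Nonempty (Fin N) := ⟨⟨k, hk⟩⟩
    have htop := hindep'.span_eq_top_of_card_eq_finrank (by simp [hdim])
    have hmap := congrArg (Submodule.map Vh.subtype) htop
    rw [Submodule.map_span, Submodule.map_top, Submodule.range_subtype] at hmap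
    rw [← hmap]
    congr 1
    ext x
    simp [Set.range_comp]
  -- coefficients of e
  obtain ⟨c, hc⟩ := (Submodule.mem_span_range_iff_exists_fun ℝ).mp (hspan ▸ heVh)
  have hcoef : ∀ i, c i = a e (ub i) := by
    intro i
    rw [← hc]
    simp [map_sum, LinearMap.sum_apply, map_smul, LinearMap.smul_apply, smul_eq_mul, horth]
  have hEk0 : ∀ i : Fin N, k ≤ (i : ℕ) → a (Ek u) (ub i) = 0 := by
    intro i hi
    have := hEmem u
    refine Submodule.span_induction (p := fun v _ => a v (ub i) = 0) ?_ ?_ ?_ ?_ this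
    · rintro _ ⟨j, rfl⟩
      rw [horth]
      have hne : (j : Fin N) ≠ i := by
        intro h
        have h2 : ((j : Fin N) : ℕ) < k := j.2
        rw [h] at h2
        omega
      simp [hne]
    · simp
    · intro x y _ _ hx hy; simp [hx, hy]
    · intro r x _ hx; simp [hx]
  have hcval : ∀ i : Fin N, c i = if (i : ℕ) < k then 0 else a u (ub i) := by
    intro i
    rw [hcoef i, hedef]
    by_cases hik : (i : ℕ) < k
    · simp only [map_sub, LinearMap.sub_apply, hPproj u (ub i) (hmem i),
        hEproj u i hik, sub_self, if_pos hik]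
    · simp only [map_sub, LinearMap.sub_apply, hPproj u (ub i) (hmem i),
        hEk0 i (Nat.le_of_not_lt hik), sub_zero, if_neg hik]
  -- diagonal formula for b on combinations
  have hexpand : ∀ (x : V) (d : Fin N → ℝ), b x (∑ j, d j • ub j) = ∑ j, d j * b x (ub j) := by
    intro x d
    rw [map_sum]
    exact Finset.sum_congr rfl fun j _ => by rw [map_smul, smul_eq_mul]
  have hexpand' : ∀ (d : Fin N → ℝ) (x : V),
      b (∑ j, d j • ub j) x = ∑ j, d j * b (ub j) x := by
    intro d x
    rw [map_sum, LinearMap.sum_apply]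
    exact Finset.sum_congr rfl fun j _ => by rw [map_smul, LinearMap.smul_apply, smul_eq_mul]
  have hdiag : ∀ d : Fin N → ℝ,
      b (∑ i, d i • ub i) (∑ j, d j • ub j) = ∑ i, d i ^ 2 / lamb i := by
    intro d
    rw [hexpand']
    refine Finset.sum_congr rfl fun i _ => ?_
    rw [hexpand]
    rw [Finset.sum_eq_single i]
    · rw [hborth]; simp; ring
    · intro j _ hj
      rw [hborth]
      simp [(Ne.symm hj)]
    · simp
  -- value of b e e
  have hbee : b e e = ∑ i, c i ^ 2 / lamb i := by rw [← hc, hdiag]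
  -- relation between coefficients and b w (ub i)
  have hbw : ∀ i : Fin N, b w (ub i) = a u (ub i) * (1 / lam - 1 / lamb i) := by
    intro i
    have h1 : b u (ub i) = a u (ub i) / lam := by
      rw [hu (ub i)]; field_simp
    have h2 : b (Ph u) (ub i) = a u (ub i) / lamb i := by
      rw [hbsymm]
      have h3 := heig i (Ph u) (hPmem u)
      have h4 : a (ub i) (Ph u) = a u (ub i) := by
        rw [hasymm, hPproj u (ub i) (hmem i)]
      rw [h4] at h3
      rw [eq_div_iff (hpos i).ne', mul_comm]
      exact h3.symm
    rw [hwdef, map_sub, LinearMap.sub_apply, h1, h2]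
    field_simp
  -- Bessel inequality
  have hBessel : ∑ i, lamb i * (b w (ub i)) ^ 2 ≤ b w w := by
    set d : Fin N → ℝ := fun i => lamb i * b w (ub i) with hddef
    set p : V := ∑ i, d i • ub i with hpdef
    have h0 := hbsd (w - p)
    have hwp : b w p = ∑ i, lamb i * (b w (ub i)) ^ 2 := by
      rw [hpdef, hexpand]
      refine Finset.sum_congr rfl fun i _ => ?_
      rw [hddef]; ring
    have hpw : b p w = ∑ i, lamb i * (b w (ub i)) ^ 2 := by
      rw [hbsymm, hwp]
    have hpp : b p p = ∑ i, lamb i * (b w (ub i)) ^ 2 := by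
      rw [hpdef, hdiag]
      refine Finset.sum_congr rfl fun i _ => ?_
      have hne := (hpos i).ne'
      simp only [hddef]
      field_simp
    have hsub : b (w - p) (w - p) = b w w - b w p - b p w + b p p := by
      simp only [map_sub, LinearMap.sub_apply]
      ring
    rw [hsub, hwp, hpw, hpp] at h0
    linarith
  -- termwise bound
  have hterm : ∀ i : Fin N, c i ^ 2 / lamb i ≤ (μk / δ) ^ 2 * (lamb i * (b w (ub i)) ^ 2) := by
    intro i
    by_cases hik : (i : ℕ) < k
    · rw [hcval i, if_pos hik]
      have h6 : (0:ℝ) ≤ (μk / δ) ^ 2 * (lamb i * (b w (ub i)) ^ 2) :=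
        mul_nonneg (sq_nonneg _) (mul_nonneg (hpos i).le (sq_nonneg _))
      simpa using h6
    · have hki : k ≤ (i : ℕ) := Nat.le_of_not_lt hik
      rw [hcval i, if_neg hik, hbw i]
      set ci := a u (ub i)
      set Δ : ℝ := 1 / lam - 1 / lamb i with hΔdef
      have hΔge : δ ≤ |Δ| := by
        have h5 := hδle i hki
        rwa [abs_sub_comm] at h5
      have hΔsq : δ ^ 2 ≤ Δ ^ 2 := by
        rw [← sq_abs Δ]
        exact pow_le_pow_left₀ hδpos.le hΔge 2
      have hμle : 1 / lamb i ≤ μk := by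
        rw [hμkdef]
        apply one_div_le_one_div_of_le (hpos ⟨k, hk⟩)
        exact hmono (by simpa [Fin.le_def] using hki)
      have hlampos := hpos i
      have hlamkpos := hpos ⟨k, hk⟩
      -- ci^2 / lamb i ≤ (μk/δ)^2 * (lamb i * (ci * Δ)^2)
      have hμipos : (0:ℝ) < 1 / lamb i := by positivity
      have h7 : (1 / lamb i) ^ 2 ≤ μk ^ 2 := pow_le_pow_left₀ hμipos.le hμle 2
      have key : δ ^ 2 * (1 / lamb i) ^ 2 ≤ μk ^ 2 * Δ ^ 2 := by
        calc δ ^ 2 * (1 / lamb i) ^ 2 ≤ Δ ^ 2 * (1 / lamb i) ^ 2 :=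
              mul_le_mul_of_nonneg_right hΔsq (sq_nonneg _)
          _ ≤ Δ ^ 2 * μk ^ 2 := mul_le_mul_of_nonneg_left h7 (sq_nonneg Δ)
          _ = μk ^ 2 * Δ ^ 2 := by ring
      have hrw : ci ^ 2 / lamb i = ci ^ 2 * (lamb i * (1 / lamb i) ^ 2) := by
        have hne := (hpos i).ne'
        field_simp
      rw [hrw]
      have hrhs : (μk / δ) ^ 2 * (lamb i * (ci * Δ) ^ 2)
          = ci ^ 2 * (lamb i * (μk ^ 2 * Δ ^ 2 / δ ^ 2)) := by ring
      rw [hrhs]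
      apply mul_le_mul_of_nonneg_left _ (sq_nonneg ci)
      apply mul_le_mul_of_nonneg_left _ hlampos.le
      rw [le_div_iff₀ (by positivity)]
      linarith [key]
  -- combine: b e e ≤ (μk/δ)^2 * b w w
  have hbee_le : b e e ≤ (μk / δ) ^ 2 * b w w := by
    rw [hbee]
    calc ∑ i, c i ^ 2 / lamb i
        ≤ ∑ i, (μk / δ) ^ 2 * (lamb i * (b w (ub i)) ^ 2) :=
          Finset.sum_le_sum fun i _ => hterm i
      _ = (μk / δ) ^ 2 * ∑ i, lamb i * (b w (ub i)) ^ 2 := by rw [Finset.mul_sum]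
      _ ≤ (μk / δ) ^ 2 * b w w := by
          apply mul_le_mul_of_nonneg_left hBessel (by positivity)
  have hsqrt_e : Real.sqrt (b e e) ≤ (μk / δ) * Real.sqrt (b w w) := by
    calc Real.sqrt (b e e) ≤ Real.sqrt ((μk / δ) ^ 2 * b w w) := Real.sqrt_le_sqrt hbee_le
      _ = (μk / δ) * Real.sqrt (b w w) := by
          rw [Real.sqrt_mul (sq_nonneg _), Real.sqrt_sq (by positivity)]
  -- triangle inequality
  have hue : u - Ek u = w + e := by rw [hwdef, hedef]; abel
  have htri : Real.sqrt (b (u - Ek u) (u - Ek u)) ≤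
      (1 + μk / δ) * Real.sqrt (b w w) := by
    calc Real.sqrt (b (u - Ek u) (u - Ek u))
        = Real.sqrt (b (w + e) (w + e)) := by rw [hue]
      _ ≤ Real.sqrt (b w w) + Real.sqrt (b e e) := bilin_triangle b hbsymm hbsd w e
      _ ≤ Real.sqrt (b w w) + (μk / δ) * Real.sqrt (b w w) := by linarith
      _ = (1 + μk / δ) * Real.sqrt (b w w) := by ring
  have hfac : (0:ℝ) ≤ 1 + μk / δ := by positivity
  have hbw_le : Real.sqrt (b w w) ≤ η * Real.sqrt (a w w) := hη u
  have hfirst : Real.sqrt (b (u - Ek u) (u - Ek u)) ≤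
      (1 + μk / δ) * η * Real.sqrt (a w w) := by
    calc Real.sqrt (b (u - Ek u) (u - Ek u)) ≤ (1 + μk / δ) * Real.sqrt (b w w) := htri
      _ ≤ (1 + μk / δ) * (η * Real.sqrt (a w w)) := mul_le_mul_of_nonneg_left hbw_le hfac
      _ = (1 + μk / δ) * η * Real.sqrt (a w w) := by ring
  -- second inequality: a w w ≤ a (u - Ek u) (u - Ek u)
  have haww_le : a w w ≤ a (u - Ek u) (u - Ek u) := by
    have hawe : a w e = 0 := by
      rw [hwdef, LinearMap.BilinForm.sub_left, hPproj u e heVh, sub_self]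
    have hexp2 : a (u - Ek u) (u - Ek u) = a w w + 2 * a w e + a e e := by
      rw [hue]
      simp only [map_add, LinearMap.add_apply]
      rw [hasymm e w]; ring
    rw [hexp2, hawe]
    have := hasd e
    linarith
  have hsqrt_a : Real.sqrt (a w w) ≤ Real.sqrt (a (u - Ek u) (u - Ek u)) :=
    Real.sqrt_le_sqrt haww_le
  refine ⟨hfirst, ?_⟩
  calc Real.sqrt (b (u - Ek u) (u - Ek u)) ≤ (1 + μk / δ) * η * Real.sqrt (a w w) := hfirst
    _ ≤ (1 + μk / δ) * η * Real.sqrt (a (u - Ek u) (u - Ek u)) := by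
        apply mul_le_mul_of_nonneg_left hsqrt_a (by positivity)
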